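/- Let W be a random variable with values in 𝒲, δ_X : 𝒲 → ℝ^d measurable and bounded, and ω : 𝒲 → ℝ^d measurable and bounded. Then E[⟨ω(W), n(W)⟩] = 0 for every bounded measurable n : 𝒲 → ℝ^d with ⟨n(w), δ_X(w)⟩ = 0 for all w, if and only if there exists a measurable scalar function a : 𝒲 → ℝ with ω(w) = a(w) δ_X(w) almost surely. -/

import Mathlib

open BigOperators MeasureTheory

/-- Proposition 4: `E[⟨ω(W), n(W)⟩] = 0` for all bounded measurable `n` pointwise
orthogonal to `δ_X` iff `ω(w) = a(w) δ_X(w)` a.s. for some measurable scalar `a`. -/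
theorem stmt4 {Ω 𝒲 : Type*} [MeasurableSpace Ω] [MeasurableSpace 𝒲]
    (μ : Measure Ω) [IsProbabilityMeasure μ] {d : ℕ}
    (W : Ω → 𝒲) (hW : Measurable W)
    (δX : 𝒲 → Fin d → ℝ) (hδX : Measurable δX)
    (CX : ℝ) (hCX : ∀ w i, |δX w i| ≤ CX)
    (ω : 𝒲 → Fin d → ℝ) (hω : Measurable ω) (Cω : ℝ) (hCω : ∀ w i, |ω w i| ≤ Cω) :
    (∀ n : 𝒲 → Fin d → ℝ, Measurable n → (∃ C, ∀ w i, |n w i| ≤ C) →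
        (∀ w, ∑ i, n w i * δX w i = 0) →
        ∫ x, (∑ i, ω (W x) i * n (W x) i) ∂μ = 0) ↔
      (∃ a : 𝒲 → ℝ, Measurable a ∧
        ∀ᵐ x ∂μ, ∀ i, ω (W x) i = a (W x) * δX (W x) i) := by
  constructor
  · intro h
    set T : 𝒲 → ℝ := fun w => ∑ i, δX w i ^ 2 with hT
    set S : 𝒲 → ℝ := fun w => ∑ i, ω w i * δX w i with hS
    have hTnn : ∀ w, 0 ≤ T w := fun w => Finset.sum_nonneg fun i _ => sq_nonneg _
    have hTmeas : Measurable T :=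
      Finset.measurable_sum _ fun i _ => ((measurable_pi_apply i).comp hδX).pow_const 2
    have hSmeas : Measurable S :=
      Finset.measurable_sum _ fun i _ =>
        ((measurable_pi_apply i).comp hω).mul ((measurable_pi_apply i).comp hδX)
    set a : 𝒲 → ℝ := fun w => S w / T w with ha
    have hameas : Measurable a := hSmeas.div hTmeas
    set n : 𝒲 → Fin d → ℝ := fun w i => ω w i - a w * δX w i with hn
    have hnmeas : Measurable n := by
      apply measurable_pi_lambda
      intro i
      exact ((measurable_pi_apply i).comp hω).sub
        (hameas.mul ((measurable_pi_apply i).comp hδX))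
    -- if T w = 0 then δX w = 0
    have hT0 : ∀ w, T w = 0 → ∀ i, δX w i = 0 := by
      intro w hw i
      have := (Finset.sum_eq_zero_iff_of_nonneg (fun i _ => sq_nonneg (δX w i))).mp hw i
        (Finset.mem_univ i)
      exact pow_eq_zero_iff (by norm_num) |>.mp this
    -- orthogonality of n to δX
    have horth : ∀ w, ∑ i, n w i * δX w i = 0 := by
      intro w
      have hexp : ∑ i, n w i * δX w i = S w - a w * T w := by
        simp only [hn, sub_mul]
        rw [Finset.sum_sub_distrib]
        congr 1
        rw [Finset.mul_sum]
        exact Finset.sum_congr rfl fun i _ => by ring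
      rw [hexp]
      by_cases hTW : T w = 0
      · have hδ0 := hT0 w hTW
        have : S w = 0 := Finset.sum_eq_zero fun i _ => by rw [hδ0 i]; ring
        simp [this, hTW]
      · rw [ha]
        field_simp
        ring
    -- bound on a w * δX w i
    have hbound : ∀ w i, |a w * δX w i| ≤ Real.sqrt d * |Cω| := by
      intro w i
      by_cases hTW : T w = 0
      · simp [ha, hTW]
        positivity
      · have hTpos : 0 < T w := lt_of_le_of_ne (hTnn w) (Ne.symm hTW)
        have hδle : |δX w i| ≤ Real.sqrt (T w) := by
          rw [← Real.sqrt_sq_eq_abs]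
          apply Real.sqrt_le_sqrt
          exact Finset.single_le_sum (f := fun j => δX w j ^ 2)
            (fun j _ => sq_nonneg _) (Finset.mem_univ i)
        have hSle : |S w| ≤ Real.sqrt (∑ j, ω w j ^ 2) * Real.sqrt (T w) := by
          have hcs := Finset.sum_mul_sq_le_sq_mul_sq Finset.univ (fun j => ω w j)
            (fun j => δX w j)
          have : |S w| ^ 2 ≤ (∑ j, ω w j ^ 2) * T w := by
            rw [sq_abs]; exact hcs
          calc |S w| = Real.sqrt (|S w| ^ 2) := (Real.sqrt_sq (abs_nonneg _)).symm
            _ ≤ Real.sqrt ((∑ j, ω w j ^ 2) * T w) := Real.sqrt_le_sqrt this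
            _ = Real.sqrt (∑ j, ω w j ^ 2) * Real.sqrt (T w) := Real.sqrt_mul
                (Finset.sum_nonneg fun j _ => sq_nonneg _) _
        have hω2 : Real.sqrt (∑ j, ω w j ^ 2) ≤ Real.sqrt d * |Cω| := by
          have : (∑ j, ω w j ^ 2) ≤ d * Cω ^ 2 := by
            calc (∑ j, ω w j ^ 2) ≤ ∑ _j : Fin d, Cω ^ 2 := by
                  apply Finset.sum_le_sum
                  intro j _
                  rw [← sq_abs]
                  exact pow_le_pow_left₀ (abs_nonneg _) (hCω w j) 2
              _ = d * Cω ^ 2 := by simp [mul_comm]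
          calc Real.sqrt (∑ j, ω w j ^ 2) ≤ Real.sqrt (d * Cω ^ 2) := Real.sqrt_le_sqrt this
            _ = Real.sqrt d * |Cω| := by
                rw [Real.sqrt_mul (by positivity), Real.sqrt_sq_eq_abs]
        calc |a w * δX w i| = |S w| / T w * |δX w i| := by
              rw [abs_mul, ha, abs_div, abs_of_pos hTpos]
          _ ≤ (Real.sqrt (∑ j, ω w j ^ 2) * Real.sqrt (T w)) / T w * Real.sqrt (T w) := by
              gcongr <;> first | exact hSle | exact hδle
          _ = Real.sqrt (∑ j, ω w j ^ 2) * (Real.sqrt (T w) * Real.sqrt (T w)) / T w := by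
              ring
          _ = Real.sqrt (∑ j, ω w j ^ 2) := by
              rw [Real.mul_self_sqrt (hTnn w)]
              field_simp
          _ ≤ Real.sqrt d * |Cω| := hω2
    have hnbound : ∀ w i, |n w i| ≤ |Cω| + Real.sqrt d * |Cω| := by
      intro w i
      calc |n w i| ≤ |ω w i| + |a w * δX w i| := abs_sub _ _
        _ ≤ |Cω| + Real.sqrt d * |Cω| :=
            add_le_add ((hCω w i).trans (le_abs_self _)) (hbound w i)
    have hint := h n hnmeas ⟨_, hnbound⟩ horth
    -- rewrite integrand as sum of squares
    have hrw : ∀ x, (∑ i, ω (W x) i * n (W x) i) = ∑ i, n (W x) i ^ 2 := by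
      intro x
      have horthW := horth (W x)
      have : ∑ i, ω (W x) i * n (W x) i
          = (∑ i, n (W x) i ^ 2) + a (W x) * ∑ i, n (W x) i * δX (W x) i := by
        rw [Finset.mul_sum, ← Finset.sum_add_distrib]
        apply Finset.sum_congr rfl
        intro i _
        simp only [hn]
        ring
      rw [this, horthW, mul_zero, add_zero]
    have hint2 : ∫ x, (∑ i, n (W x) i ^ 2) ∂μ = 0 := by
      rw [← hint]
      exact integral_congr_ae (Filter.Eventually.of_forall fun x => (hrw x).symm)
    have hmeasf : Measurable (fun x => ∑ i, n (W x) i ^ 2) :=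
      Finset.measurable_sum _ fun i _ =>
        (((measurable_pi_apply i).comp hnmeas).comp hW).pow_const 2
    have hintg : Integrable (fun x => ∑ i, n (W x) i ^ 2) μ := by
      apply Integrable.mono' (integrable_const (d * (|Cω| + Real.sqrt d * |Cω|) ^ 2))
        hmeasf.aestronglyMeasurable
      apply Filter.Eventually.of_forall
      intro x
      rw [Real.norm_eq_abs, abs_of_nonneg (Finset.sum_nonneg fun i _ => sq_nonneg _)]
      calc (∑ i, n (W x) i ^ 2) ≤ ∑ _i : Fin d, (|Cω| + Real.sqrt d * |Cω|) ^ 2 := by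
            apply Finset.sum_le_sum
            intro i _
            rw [← sq_abs]
            exact pow_le_pow_left₀ (abs_nonneg _) (hnbound (W x) i) 2
        _ = d * (|Cω| + Real.sqrt d * |Cω|) ^ 2 := by simp [mul_comm]
    have hae0 : ∀ᵐ x ∂μ, (∑ i, n (W x) i ^ 2) = 0 := by
      have := (integral_eq_zero_iff_of_nonneg
        (fun x => Finset.sum_nonneg fun i _ => sq_nonneg _) hintg).mp hint2
      filter_upwards [this] with x hx using hx
    refine ⟨a, hameas, ?_⟩
    filter_upwards [hae0] with x hx i
    have : n (W x) i = 0 := by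
      have := (Finset.sum_eq_zero_iff_of_nonneg
        (fun j _ => sq_nonneg (n (W x) j))).mp hx i (Finset.mem_univ i)
      exact pow_eq_zero_iff (by norm_num) |>.mp this
    have := sub_eq_zero.mp this
    linarith [this]
  · rintro ⟨a, _, hae⟩ n hn hC horth
    have : ∀ᵐ x ∂μ, (∑ i, ω (W x) i * n (W x) i) = 0 := by
      filter_upwards [hae] with x hx
      calc (∑ i, ω (W x) i * n (W x) i)
          = ∑ i, a (W x) * (n (W x) i * δX (W x) i) := by
            apply Finset.sum_congr rfl
            intro i _
            rw [hx i]; ring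
        _ = a (W x) * ∑ i, n (W x) i * δX (W x) i := by rw [Finset.mul_sum]
        _ = 0 := by rw [horth (W x), mul_zero]
    calc ∫ x, (∑ i, ω (W x) i * n (W x) i) ∂μ = ∫ _x, (0:ℝ) ∂μ :=
          integral_congr_ae this
      _ = 0 := integral_zero _ _
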